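/- Let K be a field of characteristic 0, let (U,·,ω) be a strong n-Lie-Poisson algebra over K, and let D : U → U be a K-linear map that is simultaneously a derivation of the associative multiplication · and a derivation of ω (i.e. D(ω(u_1,...,u_n)) = Σ_{i=1}^n ω(u_1,...,D(u_i),...,u_n)). Define the alternating (n+1)-linear map ω̄ = D∧ω by ω̄(u_0,u_1,...,u_n) = Σ_{i=0}^n (−1)^i D(u_i)·ω(u_0,...,û_i,...,u_n). Then (U,·,ω̄) is a strong (n+1)-Lie-Poisson algebra. -/

import Mathlib

open Finset

/-- `ω` is an `m`-linear map over `K`. -/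
def IsMultilinear (K : Type*) [Field K] {U : Type*} [CommRing U] [Algebra K U] {m : ℕ}
    (ω : (Fin m → U) → U) : Prop :=
  ∀ (v : Fin m → U) (i : Fin m) (c : K) (x y : U),
    ω (Function.update v i (c • x + y)) =
      c • ω (Function.update v i x) + ω (Function.update v i y)

/-- `ω` is alternating: it vanishes whenever two arguments coincide. -/
def IsAlternating {U : Type*} [CommRing U] {m : ℕ} (ω : (Fin m → U) → U) : Prop :=
  ∀ (v : Fin m → U) (i j : Fin m), i ≠ j → v i = v j → ω v = 0

/-- Fundamental Identity of type I for an `(n+1)`-ary multiplication. -/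
def FundamentalIdentityI {U : Type*} [CommRing U] {n : ℕ} (ω : (Fin (n + 1) → U) → U) : Prop :=
  ∀ (u : Fin n → U) (v : Fin (n + 1) → U),
    ω (Fin.snoc u (ω v)) =
      ∑ i : Fin (n + 1), ω (Function.update v i (ω (Fin.snoc u (v i))))

/-- The Leibniz rule relating an `(n+1)`-ary multiplication with the associative product. -/
def LeibnizRule {U : Type*} [CommRing U] {n : ℕ} (ω : (Fin (n + 1) → U) → U) : Prop :=
  ∀ (a b : U) (u : Fin n → U),
    ω (Fin.cons (a * b) u) = a * ω (Fin.cons b u) + b * ω (Fin.cons a u)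

/-- The polynomial `f^ω(u_1,…,u_n, v_1,…,v_{n+2})` for an `(n+1)`-ary multiplication `ω`. -/
def fPoly {U : Type*} [CommRing U] {n : ℕ} (ω : (Fin (n + 1) → U) → U)
    (u : Fin n → U) (v : Fin (n + 2) → U) : U :=
  ∑ i : Fin (n + 2), (-1 : U) ^ ((i : ℕ) + 1) * (ω (Fin.snoc u (v i)) * ω (i.removeNth v))

/-- The `(n+2)`-ary multiplication `D ∧ ω`:
`(D∧ω)(u_0,…,u_{n+1}) = Σ_i (−1)^i D(u_i)·ω(u_0,…,û_i,…,u_{n+1})`. -/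
def wedgeD {U : Type*} [CommRing U] {n : ℕ} (D : U → U) (ω : (Fin (n + 1) → U) → U)
    (u : Fin (n + 2) → U) : U :=
  ∑ i : Fin (n + 2), (-1 : U) ^ (i : ℕ) * (D (u i) * ω (i.removeNth u))

set_option linter.unusedSectionVars false
set_option maxHeartbeats 1000000

open Function

namespace LPaux

/-! ### Index combinatorics -/

lemma coe_succAbove {N : ℕ} (p : Fin (N+1)) (i : Fin N) :
    ((p.succAbove i : ℕ)) = if (i:ℕ) < (p:ℕ) then (i:ℕ) else (i:ℕ)+1 := by
  rcases lt_or_ge (Fin.castSucc i) p with h|h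
  · rw [Fin.succAbove_of_castSucc_lt _ _ h]
    have h' : (i:ℕ) < (p:ℕ) := h
    simp [h']
  · rw [Fin.succAbove_of_le_castSucc _ _ h]
    have h' : (p:ℕ) ≤ (i:ℕ) := h
    rw [if_neg (by omega)]
    simp

/-- Given `k` and a position `j` in the tuple with `k` removed, `dualIdx k j` is the position of
`k` in the tuple with `k.succAbove j` removed. -/
def dualIdx {N : ℕ} (k : Fin (N+1)) (j : Fin N) : Fin N :=
  if h : (j:ℕ) < (k:ℕ) then ⟨(k:ℕ)-1, by have := k.isLt; have := j.isLt; omega⟩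
  else ⟨(k:ℕ), by have := j.isLt; have := k.isLt; omega⟩

lemma coe_dualIdx {N : ℕ} (k : Fin (N+1)) (j : Fin N) :
    ((dualIdx k j : ℕ)) = if (j:ℕ) < (k:ℕ) then (k:ℕ)-1 else (k:ℕ) := by
  unfold dualIdx; split_ifs <;> simp

lemma dual1 {N : ℕ} (k : Fin (N+1)) (j : Fin N) :
    (k.succAbove j).succAbove (dualIdx k j) = k := by
  have hj := j.isLt
  apply Fin.ext
  simp only [coe_succAbove, coe_dualIdx]
  split_ifs <;> omega

lemma dual2 {N : ℕ} (k : Fin (N+1)) (j : Fin N) :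
    dualIdx (k.succAbove j) (dualIdx k j) = j := by
  have hj := j.isLt
  apply Fin.ext
  simp only [coe_succAbove, coe_dualIdx]
  split_ifs <;> omega

lemma dual3 {N : ℕ} (k : Fin (N+2)) (j : Fin (N+1)) (t : Fin N) :
    (k.succAbove j).succAbove ((dualIdx k j).succAbove t) = k.succAbove (j.succAbove t) := by
  have hj := j.isLt
  have ht := t.isLt
  apply Fin.ext
  simp only [coe_succAbove, coe_dualIdx]
  split_ifs <;> omega

lemma dual4 {N : ℕ} (k : Fin (N+1)) (j : Fin N) :
    (((k.succAbove j : ℕ)) + ((dualIdx k j : ℕ))) % 2 = ((k:ℕ) + (j:ℕ) + 1) % 2 := by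
  have hj := j.isLt
  simp only [coe_succAbove, coe_dualIdx]
  split_ifs <;> omega

/-- The involution `(k, j) ↦ (k.succAbove j, dualIdx k j)` on pairs. -/
def pairInv {N : ℕ} : (Fin (N+1) × Fin N) ≃ (Fin (N+1) × Fin N) where
  toFun p := (p.1.succAbove p.2, dualIdx p.1 p.2)
  invFun p := (p.1.succAbove p.2, dualIdx p.1 p.2)
  left_inv p := by simp [dual1, dual2]
  right_inv p := by simp [dual1, dual2]

lemma reindex {M : Type*} [AddCommMonoid M] {N : ℕ} (T : Fin (N+1) → Fin N → M) :
    ∑ k, ∑ j, T k j = ∑ k, ∑ j, T (k.succAbove j) (dualIdx k j) := by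
  rw [← Finset.sum_product', ← Finset.sum_product']
  exact (Equiv.sum_comp (pairInv (N := N)) (fun p => T p.1 p.2)).symm

lemma eq_zero_of_self_add_self {K U : Type*} [Field K] [CharZero K] [AddCommGroup U]
    [Module K U] {S : U} (h : S + S = 0) : S = 0 := by
  have h2 : (2:K) • S = 0 := by rw [two_smul]; exact h
  calc S = ((2:K)⁻¹ * 2) • S := by norm_num
  _ = (2:K)⁻¹ • ((2:K) • S) := by rw [mul_smul]
  _ = 0 := by rw [h2, smul_zero]

lemma paircancel {K U : Type*} [Field K] [CharZero K] [AddCommGroup U] [Module K U] {N : ℕ}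
    (T : Fin (N+1) → Fin N → U)
    (hT : ∀ k j, T k j = - T (k.succAbove j) (dualIdx k j)) :
    ∑ k, ∑ j, T k j = 0 := by
  apply eq_zero_of_self_add_self (K := K)
  nth_rewrite 2 [reindex T]
  rw [← Finset.sum_add_distrib]
  rw [Finset.sum_eq_zero]
  intro k _
  rw [← Finset.sum_add_distrib]
  apply Finset.sum_eq_zero
  intro j _
  rw [hT k j]; exact neg_add_cancel _

/-! ### Sign lemmas -/

lemma neg_one_pow_mod {U : Type*} [Monoid U] [HasDistribNeg U] (a : ℕ) :
    (-1:U)^a = (-1:U)^(a % 2) := by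
  conv_lhs => rw [← Nat.div_add_mod a 2]
  rw [pow_add, pow_mul, neg_one_sq, one_pow, one_mul]

lemma sign_congr {U : Type*} [Monoid U] [HasDistribNeg U] {a b : ℕ} (h : a % 2 = b % 2) :
    (-1:U)^a = (-1:U)^b := by
  rw [neg_one_pow_mod a, neg_one_pow_mod b, h]

lemma sign_mul_self {U : Type*} [Monoid U] [HasDistribNeg U] (a : ℕ) :
    (-1:U)^a * (-1:U)^a = 1 := by
  rw [← pow_add]
  exact Even.neg_one_pow ⟨a, rfl⟩

lemma sgn_dual {U : Type*} [CommRing U] {N : ℕ} (k : Fin (N+1)) (j : Fin N) :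
    (-1:U)^((k.succAbove j : ℕ)) * (-1:U)^((dualIdx k j : ℕ))
      = -((-1:U)^(k:ℕ) * (-1:U)^(j:ℕ)) := by
  rw [← pow_add, ← pow_add, sign_congr (dual4 k j), pow_succ]
  ring

/-! ### Tuple gymnastics -/

lemma removeNth_apply {U : Type*} {N : ℕ} (p : Fin (N+1)) (f : Fin (N+1) → U) (i : Fin N) :
    p.removeNth f i = f (p.succAbove i) := rfl

lemma succAbove_castSucc_castSucc {N : ℕ} (i : Fin (N+1)) (j : Fin N) :
    (Fin.castSucc i).succAbove (Fin.castSucc j) = Fin.castSucc (i.succAbove j) := by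
  apply Fin.ext
  simp only [coe_succAbove, Fin.coe_castSucc]

lemma succAbove_castSucc_last {N : ℕ} (i : Fin (N+1)) :
    (Fin.castSucc i).succAbove (Fin.last N) = Fin.last (N+1) := by
  apply Fin.ext
  have := i.isLt
  simp only [coe_succAbove, Fin.coe_castSucc, Fin.val_last]
  rw [if_neg (by omega)]

section tuples
variable {U : Type*} {N : ℕ}

lemma removeNth_castSucc_snoc (i : Fin (N+1)) (u : Fin (N+1) → U) (x : U) :
    Fin.removeNth (α := fun _ => U) (Fin.castSucc i) (Fin.snoc u x)
      = Fin.snoc (i.removeNth u : Fin N → U) x := by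
  funext j
  induction j using Fin.lastCases with
  | last =>
      show (Fin.snoc u x : Fin (N+2) → U) ((Fin.castSucc i).succAbove (Fin.last N)) = _
      rw [succAbove_castSucc_last]
      simp
  | cast j =>
      show (Fin.snoc u x : Fin (N+2) → U) ((Fin.castSucc i).succAbove (Fin.castSucc j)) = _
      rw [succAbove_castSucc_castSucc]
      simp [Fin.removeNth]

lemma removeNth_succ_cons (s : Fin (N+1)) (u : Fin (N+1) → U) (x : U) :
    Fin.removeNth (α := fun _ => U) (Fin.succ s) (Fin.cons x u)
      = Fin.cons x (s.removeNth u : Fin N → U) := by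
  funext j
  induction j using Fin.cases with
  | zero =>
      show (Fin.cons x u : Fin (N+2) → U) ((Fin.succ s).succAbove 0) = _
      have h0 : (Fin.succ s).succAbove 0 = 0 := by
        apply Fin.ext; simp [coe_succAbove]
      rw [h0]; simp
  | succ j =>
      show (Fin.cons x u : Fin (N+2) → U) ((Fin.succ s).succAbove (Fin.succ j)) = _
      have hs : (Fin.succ s).succAbove (Fin.succ j) = Fin.succ (s.succAbove j) := by
        apply Fin.ext; simp only [coe_succAbove, Fin.val_succ]; split_ifs <;> omega
      rw [hs]; simp [Fin.removeNth]

lemma succAbove_dual_ne (k : Fin (N+1)) (j t : Fin N) (ht : t ≠ dualIdx k j) :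
    (k.succAbove j).succAbove t ≠ k := by
  intro h
  apply ht
  have := dual1 k j
  exact Fin.succAbove_right_injective (h.trans this.symm)

lemma removeNth_update_succAbove (k : Fin (N+2)) (j : Fin (N+1)) (v : Fin (N+2) → U) (W : U) :
    (k.succAbove j).removeNth (update v k W) =
      update ((k.succAbove j).removeNth v) (dualIdx k j) W := by
  funext t
  by_cases ht : t = dualIdx k j
  · subst ht
    show (update v k W) ((k.succAbove j).succAbove (dualIdx k j)) = _
    rw [dual1, update_self, update_self]
  · show (update v k W) ((k.succAbove j).succAbove t) = _
    rw [update_of_ne (succAbove_dual_ne k j t ht), update_of_ne ht]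
    rfl

lemma removeNth_update_succAbove' (p : Fin (N+1)) (j : Fin N) (v : Fin (N+1) → U) (X : U) :
    p.removeNth (update v (p.succAbove j) X) = update (p.removeNth v) j X := by
  funext t
  by_cases ht : t = j
  · subst ht
    show (update v (p.succAbove t) X) (p.succAbove t) = _
    rw [update_self, update_self]
  · show (update v (p.succAbove j) X) (p.succAbove t) = _
    rw [update_of_ne (fun h => ht (Fin.succAbove_right_injective h)), update_of_ne ht]
    rfl

lemma removeNth_removeNth (k : Fin (N+2)) (j : Fin (N+1)) (v : Fin (N+2) → U) :
    (dualIdx k j).removeNth ((k.succAbove j).removeNth v) = j.removeNth (k.removeNth v) := by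
  funext t
  show v ((k.succAbove j).succAbove ((dualIdx k j).succAbove t)) = v (k.succAbove (j.succAbove t))
  rw [dual3]

end tuples

/-! ### Basic consequences of multilinearity -/

section API
variable {K : Type*} [Field K] [CharZero K] {U : Type*} [CommRing U] [Algebra K U]
variable {m : ℕ} {ω : (Fin m → U) → U}

lemma ml_add (hml : IsMultilinear K ω) (v : Fin m → U) (i : Fin m) (x y : U) :
    ω (update v i (x + y)) = ω (update v i x) + ω (update v i y) := by
  have := hml v i 1 x y
  simpa using this

lemma ml_zero (hml : IsMultilinear K ω) (v : Fin m → U) (i : Fin m) :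
    ω (update v i 0) = 0 := by
  have := ml_add hml v i 0 0
  simpa using this.symm

lemma ml_smul (hml : IsMultilinear K ω) (v : Fin m → U) (i : Fin m) (c : K) (x : U) :
    ω (update v i (c • x)) = c • ω (update v i x) := by
  have := hml v i c x 0
  simpa [ml_zero hml] using this

lemma upd_sum (hml : IsMultilinear K ω) (v : Fin m → U) (i : Fin m)
    {α : Type*} (s : Finset α) (f : α → U) :
    ω (update v i (∑ a ∈ s, f a)) = ∑ a ∈ s, ω (update v i (f a)) := by
  classical
  induction s using Finset.induction_on with
  | empty => simpa using ml_zero hml v i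
  | insert _ _ hne ih =>
      rw [Finset.sum_insert hne, ml_add hml, ih, Finset.sum_insert hne]

lemma upd_zsmul (hml : IsMultilinear K ω) (v : Fin m → U) (p : Fin m) (z : ℤ) (x : U) :
    ω (update v p (z • x)) = z • ω (update v p x) :=
  map_zsmul (AddMonoidHom.mk' (fun y => ω (update v p y)) (ml_add hml v p)) z x

lemma upd_sgn (hml : IsMultilinear K ω) (v : Fin m → U) (p : Fin m) (e : ℕ) (x : U) :
    ω (update v p ((-1:U)^e * x)) = (-1:U)^e * ω (update v p x) := by
  have hx : (-1:U)^e * x = ((-1:ℤ)^e : ℤ) • x := by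
    rw [zsmul_eq_mul]; push_cast; ring
  rw [hx, upd_zsmul hml, zsmul_eq_mul]; push_cast; ring

/-- Package `ω` as an alternating map to access `map_perm`. -/
def altMap (hml : IsMultilinear K ω) (halt : IsAlternating ω) : U [⋀^Fin m]→ₗ[K] U where
  toFun := ω
  map_update_add' := by
    intro dec v i x y
    cases Subsingleton.elim dec (instDecidableEqFin m)
    simpa using ml_add hml v i x y
  map_update_smul' := by
    intro dec v i c x
    cases Subsingleton.elim dec (instDecidableEqFin m)
    simpa using ml_smul hml v i c x
  map_eq_zero_of_eq' := fun v i j hv hij => halt v i j hij hv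

lemma comp_perm (hml : IsMultilinear K ω) (halt : IsAlternating ω)
    (v : Fin m → U) (σ : Equiv.Perm (Fin m)) :
    ω (v ∘ σ) = (Equiv.Perm.sign σ : ℤ) • ω v := by
  have := (altMap hml halt).map_perm v σ
  simp [Units.smul_def] at this ⊢
  exact this

end API

/-! ### Rotation lemmas and slot calculus for an `(n+1)`-ary `ω` -/

section API1
variable {K : Type*} [Field K] [CharZero K] {U : Type*} [CommRing U] [Algebra K U]
variable {n : ℕ} {ω : (Fin (n+1) → U) → U}

/-- Rotation: pull argument `i` to the front. -/
lemma rot (hml : IsMultilinear K ω) (halt : IsAlternating ω) (v : Fin (n+1) → U)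
    (i : Fin (n+1)) :
    ω v = (-1:U)^(i:ℕ) * ω (Fin.cons (v i) (i.removeNth v)) := by
  have hc : Fin.cons (v i) (i.removeNth v) = v ∘ (i.cycleRange).symm := by
    funext j
    refine Fin.cases ?_ (fun j => ?_) j
    · simp
    · simp [Fin.removeNth]
  rw [hc, comp_perm hml halt, Equiv.Perm.sign_symm, Fin.sign_cycleRange]
  have : (((-1:ℤˣ)^(i:ℕ) : ℤˣ) : ℤ) • ω v = (-1:U)^(i:ℕ) * ω v := by
    push_cast
    rw [zsmul_eq_mul]
    push_cast
    ring
  rw [this, ← mul_assoc, ← pow_add]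
  rw [Even.neg_one_pow ⟨(i:ℕ), rfl⟩, one_mul]

lemma update_to_cons (hml : IsMultilinear K ω) (halt : IsAlternating ω)
    (v : Fin (n+1) → U) (p : Fin (n+1)) (x : U) :
    ω (update v p x) = (-1:U)^(p:ℕ) * ω (Fin.cons x (p.removeNth v)) := by
  have := rot hml halt (update v p x) p
  simpa using this

lemma snoc_to_cons (hml : IsMultilinear K ω) (halt : IsAlternating ω)
    (t : Fin n → U) (x : U) :
    ω (Fin.snoc t x) = (-1:U)^n * ω (Fin.cons x t) := by
  have := rot hml halt (Fin.snoc t x) (Fin.last n)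
  simpa using this

lemma upd_mul (hml : IsMultilinear K ω) (halt : IsAlternating ω) (hLeib : LeibnizRule ω)
    (v : Fin (n+1) → U) (p : Fin (n+1)) (a b : U) :
    ω (update v p (a * b)) = a * ω (update v p b) + b * ω (update v p a) := by
  rw [update_to_cons hml halt, update_to_cons hml halt, update_to_cons hml halt,
    hLeib a b (p.removeNth v)]
  ring

lemma snoc_eq_update (t : Fin n → U) (x : U) :
    (Fin.snoc t x : Fin (n+1) → U) = update (Fin.snoc t (0:U)) (Fin.last n) x :=
  (Fin.update_snoc_last _ _ _).symm

lemma snoc_add (hml : IsMultilinear K ω) (t : Fin n → U) (x y : U) :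
    ω (Fin.snoc t (x + y)) = ω (Fin.snoc t x) + ω (Fin.snoc t y) := by
  rw [snoc_eq_update t (x+y), snoc_eq_update t x, snoc_eq_update t y]
  exact ml_add hml _ _ _ _

lemma snoc_sum (hml : IsMultilinear K ω) (t : Fin n → U)
    {α : Type*} (s : Finset α) (f : α → U) :
    ω (Fin.snoc t (∑ a ∈ s, f a)) = ∑ a ∈ s, ω (Fin.snoc t (f a)) := by
  rw [snoc_eq_update t _, upd_sum hml]
  exact Finset.sum_congr rfl fun a _ => by rw [← snoc_eq_update]

lemma snoc_sgn (hml : IsMultilinear K ω) (t : Fin n → U) (e : ℕ) (x : U) :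
    ω (Fin.snoc t ((-1:U)^e * x)) = (-1:U)^e * ω (Fin.snoc t x) := by
  rw [snoc_eq_update t _, upd_sgn hml, ← snoc_eq_update]

lemma snoc_mul (hml : IsMultilinear K ω) (halt : IsAlternating ω) (hLeib : LeibnizRule ω)
    (t : Fin n → U) (a b : U) :
    ω (Fin.snoc t (a * b)) = a * ω (Fin.snoc t b) + b * ω (Fin.snoc t a) := by
  rw [snoc_eq_update t (a*b), upd_mul hml halt hLeib, ← snoc_eq_update, ← snoc_eq_update]

end API1

/-! ### Expansions of the wedge -/

section wedge
variable {K : Type*} [Field K] [CharZero K] {U : Type*} [CommRing U] [Algebra K U]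
variable {n : ℕ} (ω : (Fin (n+1) → U) → U) (D : Derivation K U U)

lemma wedge_snoc (u : Fin (n+1) → U) (x : U) :
    wedgeD D ω (Fin.snoc u x) =
      (∑ i : Fin (n+1), (-1:U)^(i:ℕ) * (D (u i) * ω (Fin.snoc (i.removeNth u : Fin n → U) x)))
      + (-1:U)^(n+1) * (D x * ω u) := by
  rw [wedgeD, Fin.sum_univ_castSucc]
  congr 1
  · apply Finset.sum_congr rfl
    intro i _
    rw [removeNth_castSucc_snoc]
    simp
  · simp

lemma wedge_update (v : Fin (n+2) → U) (k : Fin (n+2)) (W : U) :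
    wedgeD D ω (update v k W) = (-1:U)^(k:ℕ) * (D W * ω (k.removeNth v))
      + ∑ j : Fin (n+1), (-1:U)^((k.succAbove j : Fin (n+2)) : ℕ) *
          (D (v (k.succAbove j)) * ω (update ((k.succAbove j).removeNth v) (dualIdx k j) W)) := by
  rw [wedgeD, Fin.sum_univ_succAbove _ k]
  congr 1
  · rw [update_self, Fin.removeNth_update]
  · apply Finset.sum_congr rfl
    intro j _
    rw [removeNth_update_succAbove, update_of_ne (Fin.succAbove_ne k j)]

lemma strong' {ω : (Fin (n+1) → U) → U}
    (hstrong : ∀ (u : Fin n → U) (v : Fin (n + 2) → U), fPoly ω u v = 0)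
    (u : Fin n → U) (v : Fin (n+2) → U) :
    ∑ k : Fin (n+2), (-1:U)^(k:ℕ) * (ω (Fin.snoc u (v k)) * ω (k.removeNth v)) = 0 := by
  have h := hstrong u v
  rw [fPoly] at h
  have : ∑ k : Fin (n+2), (-1:U)^((k:ℕ)+1) * (ω (Fin.snoc u (v k)) * ω (k.removeNth v))
      = -∑ k : Fin (n+2), (-1:U)^(k:ℕ) * (ω (Fin.snoc u (v k)) * ω (k.removeNth v)) := by
    rw [← Finset.sum_neg_distrib]
    apply Finset.sum_congr rfl
    intro k _
    rw [pow_succ]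
    ring
  rw [this] at h
  exact neg_eq_zero.mp h

end wedge

end LPaux

section parts
open LPaux Function
variable {K : Type*} [Field K] [CharZero K] {U : Type*} [CommRing U] [Algebra K U]
variable {n : ℕ} {ω : (Fin (n+1) → U) → U} (D : Derivation K U U)

theorem part1 (hml : IsMultilinear K ω) : IsMultilinear K (wedgeD D ω) := by
  intro v i c x y
  rw [wedgeD, wedgeD, wedgeD, Finset.smul_sum, ← Finset.sum_add_distrib]
  apply Finset.sum_congr rfl
  intro k _
  by_cases hk : k = i
  · subst hk
    rw [update_self, update_self, update_self, Fin.removeNth_update, Fin.removeNth_update,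
      Fin.removeNth_update, map_add, Derivation.map_smul]
    simp only [add_mul, smul_mul_assoc, mul_add, mul_smul_comm]
  · obtain ⟨j, hj⟩ := Fin.exists_succAbove_eq (show i ≠ k from fun h => hk h.symm)
    rw [update_of_ne hk, update_of_ne hk, update_of_ne hk, ← hj,
      removeNth_update_succAbove', removeNth_update_succAbove', removeNth_update_succAbove',
      hml (k.removeNth v) j c x y]
    simp [mul_add, mul_smul_comm]
theorem part2 (hml : IsMultilinear K ω) (halt : IsAlternating ω) :
    IsAlternating (wedgeD D ω) := by
  intro v i j0 hij hv
  obtain ⟨t, ht⟩ := Fin.exists_succAbove_eq (Ne.symm hij)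
  -- ht : i.succAbove t = j0
  rw [wedgeD, Fin.sum_univ_succAbove _ i, Fin.sum_univ_succAbove _ t]
  have hzero : ∀ r : Fin n,
      (-1:U)^((i.succAbove (t.succAbove r) : Fin (n+2)) : ℕ) *
        (D (v (i.succAbove (t.succAbove r))) *
          ω ((i.succAbove (t.succAbove r)).removeNth v)) = 0 := by
    intro r
    set p : Fin (n+2) := i.succAbove (t.succAbove r) with hp
    have hpi : i ≠ p := Fin.ne_succAbove i _
    have hpj : j0 ≠ p := by
      rw [← ht]
      intro h
      exact Fin.succAbove_ne t r (Fin.succAbove_right_injective (p := i) h).symm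
    obtain ⟨a, ha⟩ := Fin.exists_succAbove_eq hpi
    obtain ⟨b, hb⟩ := Fin.exists_succAbove_eq hpj
    have hab : a ≠ b := by
      intro h
      apply hij
      rw [← ha, ← hb, h]
    have : ω (p.removeNth v) = 0 := by
      apply halt (p.removeNth v) a b hab
      show v (p.succAbove a) = v (p.succAbove b)
      rw [ha, hb, hv]
    rw [this, mul_zero, mul_zero]
  rw [Finset.sum_congr rfl (fun r _ => hzero r), Finset.sum_const_zero, add_zero]
  -- remaining: term at i plus term at j0 = i.succAbove t
  have e1 : ω (i.removeNth v) =
      (-1:U)^(t:ℕ) * ω (Fin.cons (v i) (t.removeNth (i.removeNth v))) := by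
    rw [rot hml halt (i.removeNth v) t,
      show (i.removeNth v) t = v i from by rw [removeNth_apply, ht, hv]]
  have e2 : ω ((i.succAbove t).removeNth v) =
      (-1:U)^((dualIdx i t : ℕ)) * ω (Fin.cons (v i) (t.removeNth (i.removeNth v))) := by
    rw [rot hml halt ((i.succAbove t).removeNth v) (dualIdx i t), removeNth_removeNth,
      show ((i.succAbove t).removeNth v) (dualIdx i t) = v i from by rw [removeNth_apply, dual1]]
  rw [e1, e2, show v (i.succAbove t) = v i from by rw [ht, hv]]
  have hsgn := sgn_dual (U := U) i t
  set C := ω (Fin.cons (v i) (t.removeNth (i.removeNth v)))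
  linear_combination (D (v i) * C) * hsgn
theorem part4 (hLeib : LeibnizRule ω) : LeibnizRule (wedgeD D ω) := by
  have expand : ∀ (x : U) (u : Fin (n+1) → U), wedgeD D ω (Fin.cons x u) = D x * ω u +
      ∑ s : Fin (n+1), (-1:U)^((s:ℕ)+1) *
        (D (u s) * ω (Fin.cons x (s.removeNth u : Fin n → U))) := by
    intro x u
    rw [wedgeD, Fin.sum_univ_succ]
    congr 1
    · simp
    · apply Finset.sum_congr rfl
      intro s _
      rw [removeNth_succ_cons]
      simp
  intro a b u
  have hsum : ∑ s : Fin (n+1), (-1:U)^((s:ℕ)+1) *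
        (D (u s) * ω (Fin.cons (a*b) (s.removeNth u : Fin n → U)))
      = a * ∑ s : Fin (n+1), (-1:U)^((s:ℕ)+1) *
            (D (u s) * ω (Fin.cons b (s.removeNth u : Fin n → U)))
        + b * ∑ s : Fin (n+1), (-1:U)^((s:ℕ)+1) *
            (D (u s) * ω (Fin.cons a (s.removeNth u : Fin n → U))) := by
    rw [Finset.mul_sum, Finset.mul_sum, ← Finset.sum_add_distrib]
    apply Finset.sum_congr rfl
    intro s _
    rw [hLeib a b (s.removeNth u)]
    ring
  rw [expand, expand, expand, hsum, D.leibniz a b, smul_eq_mul, smul_eq_mul]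
  ring
lemma mul_add_sum_mul_sum {V : Type*} [CommRing V] {α β : Type*} (s : Finset α) (t : Finset β)
    (c q : V) (P : α → V) (b : β → V) :
    c * ((∑ i ∈ s, P i + q) * ∑ j ∈ t, b j)
      = (∑ j ∈ t, ∑ i ∈ s, c * (P i * b j)) + ∑ j ∈ t, c * (q * b j) := by
  rw [Finset.mul_sum, Finset.mul_sum, ← Finset.sum_add_distrib]
  apply Finset.sum_congr rfl
  intro j _
  rw [add_mul, mul_add, Finset.sum_mul, Finset.mul_sum]

/-- X-type term in the expansion of `fPoly (wedgeD D ω) u v`. -/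
def XT5 (ω : (Fin (n+1) → U) → U) (D : Derivation K U U) (u : Fin (n+1) → U)
    (v : Fin (n+3) → U) (k : Fin (n+3)) (j : Fin (n+2)) (i : Fin (n+1)) : U :=
  (-1:U)^((k:ℕ)+1) * (((-1:U)^(i:ℕ) * (D (u i) * ω (Fin.snoc (i.removeNth u : Fin n → U) (v k))))
    * ((-1:U)^(j:ℕ) * (D (v (k.succAbove j)) * ω (j.removeNth (k.removeNth v)))))

/-- Y-type term in the expansion of `fPoly (wedgeD D ω) u v`. -/
def YT5 (ω : (Fin (n+1) → U) → U) (D : Derivation K U U) (u : Fin (n+1) → U)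
    (v : Fin (n+3) → U) (k : Fin (n+3)) (j : Fin (n+2)) : U :=
  (-1:U)^((k:ℕ)+1) * (((-1:U)^(n+1) * (D (v k) * ω u))
    * ((-1:U)^(j:ℕ) * (D (v (k.succAbove j)) * ω (j.removeNth (k.removeNth v)))))

theorem part5 (hml : IsMultilinear K ω) (halt : IsAlternating ω)
    (hstrong : ∀ (u : Fin n → U) (v : Fin (n + 2) → U), fPoly ω u v = 0)
    (u : Fin (n+1) → U) (v : Fin (n+3) → U) : fPoly (wedgeD D ω) u v = 0 := by
  rw [fPoly]
  have hterm : ∀ k : Fin (n+3),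
      (-1:U)^((k:ℕ)+1) * (wedgeD D ω (Fin.snoc u (v k)) * wedgeD D ω (k.removeNth v))
        = (∑ j : Fin (n+2), ∑ i : Fin (n+1), XT5 ω D u v k j i)
          + ∑ j : Fin (n+2), YT5 ω D u v k j := by
    intro k
    rw [wedge_snoc ω D u (v k),
      show wedgeD D ω (k.removeNth v) = ∑ j : Fin (n+2),
        (-1:U)^(j:ℕ) * (D (v (k.succAbove j)) * ω (j.removeNth (k.removeNth v))) from rfl]
    exact mul_add_sum_mul_sum _ _ _ _ _ _
  rw [Finset.sum_congr rfl (fun k _ => hterm k), Finset.sum_add_distrib]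
  have hY : ∑ k : Fin (n+3), ∑ j : Fin (n+2), YT5 ω D u v k j = 0 := by
    apply paircancel (K := K)
    intro k j
    rw [YT5, YT5, dual1, removeNth_removeNth]
    have hsgn := sgn_dual (U := U) k j
    linear_combination (-((-1:U)^(n+1) * (D (v k) * D (v (k.succAbove j)) * ω u *
      ω (j.removeNth (k.removeNth v))))) * hsgn
  have hX : ∑ k : Fin (n+3), ∑ j : Fin (n+2), ∑ i : Fin (n+1), XT5 ω D u v k j i = 0 := by
    rw [reindex (fun k j => ∑ i : Fin (n+1), XT5 ω D u v k j i)]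
    apply Finset.sum_eq_zero
    intro k _
    rw [Finset.sum_comm]
    apply Finset.sum_eq_zero
    intro i _
    have hs := strong' (ω := ω) hstrong (i.removeNth u) (k.removeNth v)
    simp only [removeNth_apply] at hs
    calc ∑ j : Fin (n+2), XT5 ω D u v (k.succAbove j) (dualIdx k j) i
        = ∑ j : Fin (n+2), ((-1:U)^((k:ℕ)+(i:ℕ)) * (D (u i) * D (v k))) *
            ((-1:U)^(j:ℕ) * (ω (Fin.snoc (i.removeNth u : Fin n → U) (v (k.succAbove j)))
              * ω (j.removeNth (k.removeNth v)))) := by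
          apply Finset.sum_congr rfl
          intro j _
          rw [XT5, dual1, removeNth_removeNth]
          have hsgn := sgn_dual (U := U) k j
          linear_combination (-((-1:U)^(i:ℕ) * (D (u i) * D (v k) *
            ω (Fin.snoc (i.removeNth u : Fin n → U) (v (k.succAbove j))) *
            ω (j.removeNth (k.removeNth v))))) * hsgn
      _ = ((-1:U)^((k:ℕ)+(i:ℕ)) * (D (u i) * D (v k))) *
            ∑ j : Fin (n+2), (-1:U)^(j:ℕ) *
              (ω (Fin.snoc (i.removeNth u : Fin n → U) (v (k.succAbove j)))
                * ω (j.removeNth (k.removeNth v))) := by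
          rw [Finset.mul_sum]
      _ = 0 := by rw [hs, mul_zero]
  rw [hX, hY, add_zero]
/-! ### Fundamental identity: atoms -/

lemma D_sgn (e : ℕ) (x : U) : D ((-1:U)^e * x) = (-1:U)^e * D x := by
  rcases Nat.even_or_odd e with he|he
  · rw [he.neg_one_pow, one_mul, one_mul]
  · rw [he.neg_one_pow, neg_one_mul, neg_one_mul, map_neg]

lemma D_mul (a b : U) : D (a * b) = a * D b + b * D a := by
  rw [D.leibniz, smul_eq_mul, smul_eq_mul]

section FIatoms
variable (ω : (Fin (n+1) → U) → U) (D : Derivation K U U)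
  (u : Fin (n+1) → U) (v : Fin (n+2) → U)

def AT1 (i : Fin (n+1)) (j : Fin (n+2)) (p : Fin (n+1)) : U :=
  (-1:U)^(i:ℕ) * (-1:U)^(j:ℕ) * (D (u i) * D (v j) *
    ω (Function.update (j.removeNth v) p (ω (Fin.snoc (i.removeNth u : Fin n → U) (v (j.succAbove p))))))

def AT2 (i : Fin (n+1)) (j : Fin (n+2)) : U :=
  (-1:U)^(i:ℕ) * (-1:U)^(j:ℕ) * (D (u i) * ω (j.removeNth v) *
    ω (Fin.snoc (i.removeNth u : Fin n → U) (D (v j))))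

def AT3 (j : Fin (n+2)) : U :=
  (-1:U)^(n+1) * (-1:U)^(j:ℕ) * (ω u * ω (j.removeNth v) * D (D (v j)))

def AT4 (j : Fin (n+2)) (p : Fin (n+1)) : U :=
  (-1:U)^(n+1) * (-1:U)^(j:ℕ) * (ω u * D (v j) *
    ω (Function.update (j.removeNth v) p (D (v (j.succAbove p)))))

def BT1 (k : Fin (n+2)) (j : Fin (n+1)) (i : Fin (n+1)) : U :=
  (-1:U)^((k.succAbove j : Fin (n+2)) : ℕ) * (-1:U)^(i:ℕ) * (D (v (k.succAbove j)) * D (u i) *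
    ω (Function.update ((k.succAbove j).removeNth v) (dualIdx k j)
        (ω (Fin.snoc (i.removeNth u : Fin n → U) (v k)))))

def BT2 (k : Fin (n+2)) (j : Fin (n+1)) (i : Fin (n+1)) : U :=
  (-1:U)^((k.succAbove j : Fin (n+2)) : ℕ) * (-1:U)^(i:ℕ) * (D (v (k.succAbove j)) *
    ω (Fin.snoc (i.removeNth u : Fin n → U) (v k)) *
    ω (Function.update ((k.succAbove j).removeNth v) (dualIdx k j) (D (u i))))

def BT3 (k : Fin (n+2)) (j : Fin (n+1)) : U :=
  (-1:U)^((k.succAbove j : Fin (n+2)) : ℕ) * (-1:U)^(n+1) * (D (v (k.succAbove j)) * D (v k) *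
    ω (Function.update ((k.succAbove j).removeNth v) (dualIdx k j) (ω u)))

def BT4 (k : Fin (n+2)) (j : Fin (n+1)) : U :=
  (-1:U)^((k.succAbove j : Fin (n+2)) : ℕ) * (-1:U)^(n+1) * (D (v (k.succAbove j)) * ω u *
    ω (Function.update ((k.succAbove j).removeNth v) (dualIdx k j) (D (v k))))

def BT5 (k : Fin (n+2)) (i : Fin (n+1)) (r : Fin n) : U :=
  (-1:U)^(k:ℕ) * (-1:U)^(i:ℕ) * (D (u i) *
    ω (Fin.snoc (Function.update (i.removeNth u : Fin n → U) r (D (u (i.succAbove r)))) (v k)) *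
    ω (k.removeNth v))

def BT6 (k : Fin (n+2)) (i : Fin (n+1)) : U :=
  (-1:U)^(k:ℕ) * (-1:U)^(i:ℕ) * (D (u i) * ω (Fin.snoc (i.removeNth u : Fin n → U) (D (v k))) *
    ω (k.removeNth v))

def BT9 (k : Fin (n+2)) (i : Fin (n+1)) : U :=
  (-1:U)^(k:ℕ) * (-1:U)^(i:ℕ) * (ω (Fin.snoc (i.removeNth u : Fin n → U) (v k)) * D (D (u i)) *
    ω (k.removeNth v))

def BT8 (k : Fin (n+2)) (i : Fin (n+1)) : U :=
  (-1:U)^(k:ℕ) * (-1:U)^(n+1) * (D (v k) * ω (Function.update u i (D (u i))) * ω (k.removeNth v))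

def BT10 (k : Fin (n+2)) : U :=
  (-1:U)^(k:ℕ) * (-1:U)^(n+1) * (ω u * D (D (v k)) * ω (k.removeNth v))

end FIatoms

lemma LHS_expand (hml : IsMultilinear K ω) (halt : IsAlternating ω)
    (hFI : FundamentalIdentityI ω) (hLeib : LeibnizRule ω)
    (hDω : ∀ u : Fin (n + 1) → U,
      D (ω u) = ∑ i : Fin (n + 1), ω (Function.update u i (D (u i))))
    (u : Fin (n+1) → U) (v : Fin (n+2) → U) :
    wedgeD D ω (Fin.snoc u (wedgeD D ω v)) =
      (∑ i : Fin (n+1), ((∑ j : Fin (n+2), ∑ p : Fin (n+1), AT1 ω D u v i j p)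
          + ∑ j : Fin (n+2), AT2 ω D u v i j))
      + ∑ j : Fin (n+2), ((∑ p : Fin (n+1), AT4 ω D u v j p) + AT3 ω D u v j) := by
  rw [wedge_snoc ω D u (wedgeD D ω v)]
  congr 1
  · -- first part
    apply Finset.sum_congr rfl
    intro i _
    have hz : ω (Fin.snoc (i.removeNth u : Fin n → U) (wedgeD D ω v))
        = ∑ j : Fin (n+2), (-1:U)^(j:ℕ) *
            (D (v j) * ω (Fin.snoc (i.removeNth u : Fin n → U) (ω (j.removeNth v)))
              + ω (j.removeNth v) * ω (Fin.snoc (i.removeNth u : Fin n → U) (D (v j)))) := by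
      rw [show wedgeD D ω v
          = ∑ j : Fin (n+2), (-1:U)^(j:ℕ) * (D (v j) * ω (j.removeNth v)) from rfl,
        snoc_sum hml]
      exact Finset.sum_congr rfl fun j _ => by
        rw [snoc_sgn hml, snoc_mul hml halt hLeib]
    rw [hz, Finset.mul_sum, Finset.mul_sum, ← Finset.sum_add_distrib]
    apply Finset.sum_congr rfl
    intro j _
    have hfi := hFI (i.removeNth u) (j.removeNth v)
    simp only [removeNth_apply] at hfi
    rw [hfi, mul_add, mul_add, mul_add]
    congr 1
    · rw [Finset.mul_sum, Finset.mul_sum, Finset.mul_sum, Finset.mul_sum]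
      exact Finset.sum_congr rfl fun p _ => by simp only [AT1]; ring
    · simp only [AT2]; ring
  · -- second part
    have hdz : D (wedgeD D ω v) = ∑ j : Fin (n+2), (-1:U)^(j:ℕ) *
        (D (v j) * (∑ p : Fin (n+1),
            ω (Function.update (j.removeNth v) p (D (v (j.succAbove p)))))
          + ω (j.removeNth v) * D (D (v j))) := by
      rw [show wedgeD D ω v
          = ∑ j : Fin (n+2), (-1:U)^(j:ℕ) * (D (v j) * ω (j.removeNth v)) from rfl,
        map_sum]
      apply Finset.sum_congr rfl
      intro j _
      rw [D_sgn D, D_mul D]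
      have hd := hDω (j.removeNth v)
      simp only [removeNth_apply] at hd
      rw [hd]
    rw [hdz, Finset.sum_mul, Finset.mul_sum]
    apply Finset.sum_congr rfl
    intro j _
    rw [mul_add, add_mul, mul_add]
    congr 1
    · rw [Finset.mul_sum, Finset.mul_sum, Finset.sum_mul, Finset.mul_sum]
      exact Finset.sum_congr rfl fun p _ => by simp only [AT4]; ring
    · simp only [AT3]; ring
lemma hDsnoc (hDω : ∀ u : Fin (n + 1) → U,
      D (ω u) = ∑ i : Fin (n + 1), ω (Function.update u i (D (u i))))
    (t : Fin n → U) (x : U) :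
    D (ω (Fin.snoc t x)) = (∑ r : Fin n, ω (Fin.snoc (Function.update t r (D (t r))) x))
      + ω (Fin.snoc t (D x)) := by
  rw [hDω (Fin.snoc t x), Fin.sum_univ_castSucc]
  congr 1
  · apply Finset.sum_congr rfl
    intro r _
    rw [Fin.snoc_castSucc, ← Fin.snoc_update]
  · rw [Fin.snoc_last, Fin.update_snoc_last]

lemma P_expand (hml : IsMultilinear K ω) (halt : IsAlternating ω)
    (hDω : ∀ u : Fin (n + 1) → U,
      D (ω u) = ∑ i : Fin (n + 1), ω (Function.update u i (D (u i))))
    (u : Fin (n+1) → U) (v : Fin (n+2) → U) (k : Fin (n+2)) :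
    (-1:U)^(k:ℕ) * (D (wedgeD D ω (Fin.snoc u (v k))) * ω (k.removeNth v)) =
      ((∑ i : Fin (n+1), (((∑ r : Fin n, BT5 ω D u v k i r) + BT6 ω D u v k i)
          + BT9 ω D u v k i))
        + ((∑ i : Fin (n+1), BT8 ω D u v k i) + BT10 ω D u v k)) := by
  rw [wedge_snoc ω D u (v k), map_add, map_sum]
  have hDi : ∀ i : Fin (n+1), D ((-1:U)^(i:ℕ) * (D (u i)
        * ω (Fin.snoc (i.removeNth u : Fin n → U) (v k))))
      = (-1:U)^(i:ℕ) * ((D (u i) * ((∑ r : Fin n,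
            ω (Fin.snoc (Function.update (i.removeNth u : Fin n → U) r
              (D (u (i.succAbove r)))) (v k)))
          + ω (Fin.snoc (i.removeNth u : Fin n → U) (D (v k)))))
        + ω (Fin.snoc (i.removeNth u : Fin n → U) (v k)) * D (D (u i))) := by
    intro i
    rw [D_sgn D, D_mul D, hDsnoc D hDω]
    simp only [removeNth_apply]
  rw [Finset.sum_congr rfl (fun i _ => hDi i), D_sgn D, D_mul D, hDω u]
  rw [add_mul, mul_add, Finset.sum_mul, Finset.mul_sum]
  congr 1
  · apply Finset.sum_congr rfl
    intro i _
    have h5 : (-1:U)^(k:ℕ) * (((-1:U)^(i:ℕ) * (D (u i) * (∑ r : Fin n,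
          ω (Fin.snoc (Function.update (i.removeNth u : Fin n → U) r
            (D (u (i.succAbove r)))) (v k))))) * ω (k.removeNth v))
        = ∑ r : Fin n, BT5 ω D u v k i r := by
      rw [Finset.mul_sum, Finset.mul_sum, Finset.sum_mul, Finset.mul_sum]
      exact Finset.sum_congr rfl fun r _ => by simp only [BT5]; ring
    rw [← h5]
    simp only [BT6, BT9]
    ring
  · have h8 : (-1:U)^(k:ℕ) * (((-1:U)^(n+1) * (D (v k) * (∑ i : Fin (n+1),
          ω (Function.update u i (D (u i)))))) * ω (k.removeNth v))
        = ∑ i : Fin (n+1), BT8 ω D u v k i := by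
      rw [Finset.mul_sum, Finset.mul_sum, Finset.sum_mul, Finset.mul_sum]
      exact Finset.sum_congr rfl fun i _ => by simp only [BT8]; ring
    rw [← h8]
    simp only [BT10]
    ring

lemma Q_expand (hml : IsMultilinear K ω) (halt : IsAlternating ω) (hLeib : LeibnizRule ω)
    (u : Fin (n+1) → U) (v : Fin (n+2) → U) (k : Fin (n+2)) (j : Fin (n+1)) :
    (-1:U)^((k.succAbove j : Fin (n+2)) : ℕ) * (D (v (k.succAbove j)) *
        ω (Function.update ((k.succAbove j).removeNth v) (dualIdx k j)
          (wedgeD D ω (Fin.snoc u (v k))))) =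
      (((∑ i : Fin (n+1), BT1 ω D u v k j i) + ∑ i : Fin (n+1), BT2 ω D u v k j i)
        + (BT3 ω D u v k j + BT4 ω D u v k j)) := by
  rw [wedge_snoc ω D u (v k), ml_add hml, upd_sum hml]
  have hup : ∀ i : Fin (n+1),
      ω (Function.update ((k.succAbove j).removeNth v) (dualIdx k j)
        ((-1:U)^(i:ℕ) * (D (u i) * ω (Fin.snoc (i.removeNth u : Fin n → U) (v k)))))
      = (-1:U)^(i:ℕ) * (D (u i) * ω (Function.update ((k.succAbove j).removeNth v) (dualIdx k j)
            (ω (Fin.snoc (i.removeNth u : Fin n → U) (v k))))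
          + ω (Fin.snoc (i.removeNth u : Fin n → U) (v k)) *
            ω (Function.update ((k.succAbove j).removeNth v) (dualIdx k j) (D (u i)))) := by
    intro i
    rw [upd_sgn hml, upd_mul hml halt hLeib]
  rw [Finset.sum_congr rfl (fun i _ => hup i), upd_sgn hml, upd_mul hml halt hLeib]
  have h12 : (-1:U)^((k.succAbove j : Fin (n+2)) : ℕ) * (D (v (k.succAbove j)) *
        ∑ i : Fin (n+1), (-1:U)^(i:ℕ) * (D (u i) *
            ω (Function.update ((k.succAbove j).removeNth v) (dualIdx k j)
              (ω (Fin.snoc (i.removeNth u : Fin n → U) (v k))))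
          + ω (Fin.snoc (i.removeNth u : Fin n → U) (v k)) *
            ω (Function.update ((k.succAbove j).removeNth v) (dualIdx k j) (D (u i)))))
      = (∑ i : Fin (n+1), BT1 ω D u v k j i) + ∑ i : Fin (n+1), BT2 ω D u v k j i := by
    rw [Finset.mul_sum, Finset.mul_sum, ← Finset.sum_add_distrib]
    exact Finset.sum_congr rfl fun i _ => by simp only [BT1, BT2]; ring
  trans ((-1:U)^((k.succAbove j : Fin (n+2)) : ℕ) * (D (v (k.succAbove j)) *
        ∑ i : Fin (n+1), (-1:U)^(i:ℕ) * (D (u i) *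
            ω (Function.update ((k.succAbove j).removeNth v) (dualIdx k j)
              (ω (Fin.snoc (i.removeNth u : Fin n → U) (v k))))
          + ω (Fin.snoc (i.removeNth u : Fin n → U) (v k)) *
            ω (Function.update ((k.succAbove j).removeNth v) (dualIdx k j) (D (u i)))))
      + (-1:U)^((k.succAbove j : Fin (n+2)) : ℕ) * (D (v (k.succAbove j)) *
          ((-1:U)^(n+1) * (D (v k) *
              ω (Function.update ((k.succAbove j).removeNth v) (dualIdx k j) (ω u))
            + ω u *
              ω (Function.update ((k.succAbove j).removeNth v) (dualIdx k j) (D (v k)))))))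
  · ring
  · rw [h12]
    simp only [BT3, BT4]
    ring
lemma M3 (u : Fin (n+1) → U) (v : Fin (n+2) → U) :
    ∑ j : Fin (n+2), AT3 ω D u v j = ∑ k : Fin (n+2), BT10 ω D u v k :=
  Finset.sum_congr rfl fun j _ => by simp only [AT3, BT10]; ring

lemma M2 (u : Fin (n+1) → U) (v : Fin (n+2) → U) :
    ∑ i : Fin (n+1), ∑ j : Fin (n+2), AT2 ω D u v i j
      = ∑ k : Fin (n+2), ∑ i : Fin (n+1), BT6 ω D u v k i := by
  rw [Finset.sum_comm]
  exact Finset.sum_congr rfl fun k _ => Finset.sum_congr rfl fun i _ => by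
    simp only [AT2, BT6]; ring

lemma M4 (hml : IsMultilinear K ω) (u : Fin (n+1) → U) (v : Fin (n+2) → U) :
    ∑ j : Fin (n+2), ∑ p : Fin (n+1), AT4 ω D u v j p
      = ∑ k : Fin (n+2), ∑ j : Fin (n+1), BT4 ω D u v k j := by
  rw [reindex (fun k j => BT4 ω D u v k j)]
  apply Finset.sum_congr rfl
  intro k _
  apply Finset.sum_congr rfl
  intro j _
  simp only [AT4, BT4, dual1, dual2]
  ring

lemma M1 (u : Fin (n+1) → U) (v : Fin (n+2) → U) :
    ∑ i : Fin (n+1), ∑ j : Fin (n+2), ∑ p : Fin (n+1), AT1 ω D u v i j p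
      = ∑ k : Fin (n+2), ∑ j : Fin (n+1), ∑ i : Fin (n+1), BT1 ω D u v k j i := by
  rw [Finset.sum_comm]
  rw [reindex (fun k j => ∑ i : Fin (n+1), BT1 ω D u v k j i)]
  apply Finset.sum_congr rfl
  intro k _
  rw [Finset.sum_comm]
  apply Finset.sum_congr rfl
  intro j _
  apply Finset.sum_congr rfl
  intro i _
  simp only [AT1, BT1, dual1, dual2]
  ring

lemma M5 (hml : IsMultilinear K ω) (halt : IsAlternating ω)
    (u : Fin (n+1) → U) (v : Fin (n+2) → U) :
    ∑ k : Fin (n+2), ∑ j : Fin (n+1), BT3 ω D u v k j = 0 := by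
  apply paircancel (K := K)
  intro k j
  simp only [BT3, dual1, dual2]
  rw [update_to_cons hml halt ((k.succAbove j).removeNth v) (dualIdx k j) (ω u),
    removeNth_removeNth, update_to_cons hml halt (k.removeNth v) j (ω u)]
  have hsgn := sgn_dual (U := U) k j
  linear_combination ((-1:U)^(n+1) * (D (v (k.succAbove j)) * D (v k) *
    ω (Fin.cons (ω u) (j.removeNth (k.removeNth v) : Fin n → U)))) * hsgn

lemma M6 (hml : IsMultilinear K ω) (halt : IsAlternating ω)
    (hstrong : ∀ (u : Fin n → U) (v : Fin (n + 2) → U), fPoly ω u v = 0)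
    (u : Fin (n+1) → U) (v : Fin (n+2) → U) :
    ∑ k : Fin (n+2), ∑ i : Fin (n+1), BT9 ω D u v k i = 0 := by
  rw [Finset.sum_comm]
  apply Finset.sum_eq_zero
  intro i _
  have hs := strong' (ω := ω) hstrong (i.removeNth u) v
  calc ∑ k : Fin (n+2), BT9 ω D u v k i
      = ∑ k : Fin (n+2), ((-1:U)^(i:ℕ) * D (D (u i))) * ((-1:U)^(k:ℕ) *
          (ω (Fin.snoc (i.removeNth u : Fin n → U) (v k)) * ω (k.removeNth v))) :=
        Finset.sum_congr rfl fun k _ => by simp only [BT9]; ring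
    _ = ((-1:U)^(i:ℕ) * D (D (u i))) * ∑ k : Fin (n+2), (-1:U)^(k:ℕ) *
          (ω (Fin.snoc (i.removeNth u : Fin n → U) (v k)) * ω (k.removeNth v)) := by
        rw [Finset.mul_sum]
    _ = 0 := by rw [hs, mul_zero]

lemma M7 (hml : IsMultilinear K ω) (halt : IsAlternating ω)
    (hstrong : ∀ (u : Fin n → U) (v : Fin (n + 2) → U), fPoly ω u v = 0)
    (u : Fin (n+1) → U) (v : Fin (n+2) → U) :
    ∑ k : Fin (n+2), ∑ i : Fin (n+1), ∑ r : Fin n, BT5 ω D u v k i r = 0 := by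
  rw [Finset.sum_comm]
  apply Finset.sum_eq_zero
  intro i _
  rw [Finset.sum_comm]
  apply Finset.sum_eq_zero
  intro r _
  have hs := strong' (ω := ω) hstrong
    (Function.update (i.removeNth u : Fin n → U) r (D (u (i.succAbove r)))) v
  calc ∑ k : Fin (n+2), BT5 ω D u v k i r
      = ∑ k : Fin (n+2), ((-1:U)^(i:ℕ) * D (u i)) * ((-1:U)^(k:ℕ) *
          (ω (Fin.snoc (Function.update (i.removeNth u : Fin n → U) r
              (D (u (i.succAbove r)))) (v k)) * ω (k.removeNth v))) :=
        Finset.sum_congr rfl fun k _ => by simp only [BT5]; ring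
    _ = ((-1:U)^(i:ℕ) * D (u i)) * ∑ k : Fin (n+2), (-1:U)^(k:ℕ) *
          (ω (Fin.snoc (Function.update (i.removeNth u : Fin n → U) r
              (D (u (i.succAbove r)))) (v k)) * ω (k.removeNth v)) := by
        rw [Finset.mul_sum]
    _ = 0 := by rw [hs, mul_zero]

lemma C1' (hml : IsMultilinear K ω) (halt : IsAlternating ω)
    (hstrong : ∀ (u : Fin n → U) (v : Fin (n + 2) → U), fPoly ω u v = 0)
    (u : Fin (n+1) → U) (v : Fin (n+2) → U) (k : Fin (n+2)) (i : Fin (n+1)) :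
    ∑ j : Fin (n+1), (-1:U)^(j:ℕ) *
        (ω (Fin.snoc (i.removeNth u : Fin n → U) (v (k.succAbove j)))
          * ω (Fin.cons (D (u i)) (j.removeNth (k.removeNth v) : Fin n → U)))
      = ω (Fin.snoc (i.removeNth u : Fin n → U) (D (u i))) * ω (k.removeNth v) := by
  have h0 := strong' (ω := ω) hstrong (i.removeNth u) (Function.update v k (D (u i)))
  rw [Fin.sum_univ_succAbove _ k, update_self, Fin.removeNth_update] at h0
  have heq : ∀ j : Fin (n+1),
      (-1:U)^((k.succAbove j : Fin (n+2)):ℕ) *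
        (ω (Fin.snoc (i.removeNth u : Fin n → U)
            ((Function.update v k (D (u i))) (k.succAbove j)))
          * ω ((k.succAbove j).removeNth (Function.update v k (D (u i)))))
      = -((-1:U)^(k:ℕ) * ((-1:U)^(j:ℕ) *
          (ω (Fin.snoc (i.removeNth u : Fin n → U) (v (k.succAbove j)))
            * ω (Fin.cons (D (u i)) (j.removeNth (k.removeNth v) : Fin n → U))))) := by
    intro j
    rw [update_of_ne (Fin.succAbove_ne k j), removeNth_update_succAbove,
      update_to_cons hml halt, removeNth_removeNth]
    have hsgn := sgn_dual (U := U) k j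
    linear_combination (ω (Fin.snoc (i.removeNth u : Fin n → U) (v (k.succAbove j)))
      * ω (Fin.cons (D (u i)) (j.removeNth (k.removeNth v) : Fin n → U))) * hsgn
  rw [Finset.sum_congr rfl (fun j _ => heq j)] at h0
  rw [Finset.sum_neg_distrib, ← Finset.mul_sum] at h0
  have h2 := congrArg (fun x => (-1:U)^(k:ℕ) * x) h0
  simp only [mul_add, mul_neg, ← mul_assoc, LPaux.sign_mul_self, one_mul, mul_zero] at h2
  have h3 : ∑ j : Fin (n+1), (-1:U)^(j:ℕ) *
        (ω (Fin.snoc (i.removeNth u : Fin n → U) (v (k.succAbove j)))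
          * ω (Fin.cons (D (u i)) (j.removeNth (k.removeNth v) : Fin n → U)))
      = ∑ j : Fin (n+1), (-1:U)^(j:ℕ) *
          ω (Fin.snoc (i.removeNth u : Fin n → U) (v (k.succAbove j)))
          * ω (Fin.cons (D (u i)) (j.removeNth (k.removeNth v) : Fin n → U)) :=
    Finset.sum_congr rfl fun j _ => by ring
  rw [h3]
  linear_combination -h2

lemma M8 (hml : IsMultilinear K ω) (halt : IsAlternating ω)
    (hstrong : ∀ (u : Fin n → U) (v : Fin (n + 2) → U), fPoly ω u v = 0)
    (u : Fin (n+1) → U) (v : Fin (n+2) → U) :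
    ∑ k : Fin (n+2), ∑ j : Fin (n+1), ∑ i : Fin (n+1), BT2 ω D u v k j i
      = -∑ k : Fin (n+2), ∑ i : Fin (n+1), BT8 ω D u v k i := by
  rw [reindex (fun k j => ∑ i : Fin (n+1), BT2 ω D u v k j i), ← Finset.sum_neg_distrib]
  apply Finset.sum_congr rfl
  intro k _
  rw [Finset.sum_comm, ← Finset.sum_neg_distrib]
  apply Finset.sum_congr rfl
  intro i _
  have hb := C1' (ω := ω) (D := D) hml halt hstrong u v k i
  calc ∑ j : Fin (n+1), BT2 ω D u v (k.succAbove j) (dualIdx k j) i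
      = ∑ j : Fin (n+1), ((-1:U)^(k:ℕ) * (-1:U)^(i:ℕ) * D (v k)) * ((-1:U)^(j:ℕ) *
          (ω (Fin.snoc (i.removeNth u : Fin n → U) (v (k.succAbove j)))
            * ω (Fin.cons (D (u i)) (j.removeNth (k.removeNth v) : Fin n → U)))) := by
        apply Finset.sum_congr rfl
        intro j _
        simp only [BT2, dual1, dual2]
        rw [update_to_cons hml halt (k.removeNth v) j (D (u i))]
        ring
    _ = ((-1:U)^(k:ℕ) * (-1:U)^(i:ℕ) * D (v k)) * ∑ j : Fin (n+1), ((-1:U)^(j:ℕ) *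
          (ω (Fin.snoc (i.removeNth u : Fin n → U) (v (k.succAbove j)))
            * ω (Fin.cons (D (u i)) (j.removeNth (k.removeNth v) : Fin n → U)))) := by
        rw [Finset.mul_sum]
    _ = -BT8 ω D u v k i := by
        rw [hb]
        simp only [BT8]
        rw [update_to_cons hml halt u i (D (u i)),
          snoc_to_cons hml halt (i.removeNth u : Fin n → U) (D (u i)), pow_succ]
        ring
theorem part3 (hml : IsMultilinear K ω) (halt : IsAlternating ω)
    (hFI : FundamentalIdentityI ω) (hLeib : LeibnizRule ω)
    (hstrong : ∀ (u : Fin n → U) (v : Fin (n + 2) → U), fPoly ω u v = 0)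
    (hDω : ∀ u : Fin (n + 1) → U,
      D (ω u) = ∑ i : Fin (n + 1), ω (Function.update u i (D (u i)))) :
    FundamentalIdentityI (wedgeD D ω) := by
  intro u v
  rw [LHS_expand D hml halt hFI hLeib hDω u v]
  have hRk : ∀ k : Fin (n+2),
      wedgeD D ω (Function.update v k (wedgeD D ω (Fin.snoc u (v k))))
      = (((∑ i : Fin (n+1), (((∑ r : Fin n, BT5 ω D u v k i r) + BT6 ω D u v k i)
            + BT9 ω D u v k i))
          + ((∑ i : Fin (n+1), BT8 ω D u v k i) + BT10 ω D u v k))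
        + ∑ j : Fin (n+1), (((∑ i : Fin (n+1), BT1 ω D u v k j i)
            + ∑ i : Fin (n+1), BT2 ω D u v k j i)
          + (BT3 ω D u v k j + BT4 ω D u v k j))) := by
    intro k
    rw [wedge_update ω D v k _]
    congr 1
    · exact P_expand D hml halt hDω u v k
    · exact Finset.sum_congr rfl fun j _ => Q_expand D hml halt hLeib u v k j
  rw [Finset.sum_congr rfl (fun k _ => hRk k)]
  simp only [Finset.sum_add_distrib]
  rw [M1 D u v, M2 D u v, M3 D u v, M4 D hml u v, M5 D hml halt u v,
    M6 D hml halt hstrong u v, M7 D hml halt hstrong u v, M8 D hml halt hstrong u v]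
  abel

end parts


/-- If `(U,·,ω)` is a strong `(n+1)`-Lie-Poisson algebra over a field of characteristic `0`
and `D` is simultaneously a derivation of `·` and of `ω`, then `(U,·,D∧ω)` is a strong
`(n+2)`-Lie-Poisson algebra. -/
theorem wedgeD_strong_LiePoisson {K : Type*} [Field K] [CharZero K]
    {U : Type*} [CommRing U] [Algebra K U] {n : ℕ}
    (ω : (Fin (n + 1) → U) → U)
    (hml : IsMultilinear K ω) (halt : IsAlternating ω)
    (hFI : FundamentalIdentityI ω) (hLeib : LeibnizRule ω)
    (hstrong : ∀ (u : Fin n → U) (v : Fin (n + 2) → U), fPoly ω u v = 0)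
    (D : Derivation K U U)
    (hDω : ∀ u : Fin (n + 1) → U,
      D (ω u) = ∑ i : Fin (n + 1), ω (Function.update u i (D (u i)))) :
    IsMultilinear K (wedgeD D ω) ∧ IsAlternating (wedgeD D ω) ∧
      FundamentalIdentityI (wedgeD D ω) ∧ LeibnizRule (wedgeD D ω) ∧
      ∀ (u : Fin (n + 1) → U) (v : Fin (n + 3) → U), fPoly (wedgeD D ω) u v = 0 := by
  exact ⟨part1 D hml, part2 D hml halt,
    part3 D hml halt hFI hLeib hstrong hDω, part4 D hLeib,
    part5 D hml halt hstrong⟩
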